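/- arXiv:2504.06773 — 6 statements merged into one kernel-verified Lean document; each statement's English description precedes it below -/
import Mathlib

section
/- Let λ∈(0,1), α=(α₁,α₂)∈ℝ², and let φ:ℝ→ℝ be C¹, 1-periodic with ∫₀¹ φ(x)dx=0. Let ψ:ℝ→ℝ be continuous and 1-periodic, set g(x):=x+α₁+λψ(x)+φ(x), and assume g is a homeomorphism of ℝ. Then the graph Γ={(x,ψ(x)) : x∈ℝ} is invariant under F^♭_{λ,α} if and only if for every x∈ℝ: (1/(1+λ))·g(x) + (λ/(1+λ))·g⁻¹(x) = x + (1/(1+λ))·((1−λ)α₁ + λα₂ + φ(x)). -/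
noncomputable section

open Real MeasureTheory

theorem herman_formula_dim1 (lam α₁ α₂ : ℝ) (hlam : lam ∈ Set.Ioo (0 : ℝ) 1)
    (φ : ℝ → ℝ) (hφ : ContDiff ℝ 1 φ) (hφper : ∀ x, φ (x + 1) = φ x)
    (hφavg : (∫ x in (0 : ℝ)..1, φ x) = 0)
    (ψ : ℝ → ℝ) (hψ : Continuous ψ) (hψper : ∀ x, ψ (x + 1) = ψ x)
    (g ginv : ℝ → ℝ) (hg : ∀ x, g x = x + α₁ + lam * ψ x + φ x)
    -- g is a homeomorphism of ℝ with inverse ginv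
    (hgc : Continuous g) (hginvc : Continuous ginv)
    (hleft : ∀ x, ginv (g x) = x) (hright : ∀ x, g (ginv x) = x) :
    ((fun p : ℝ × ℝ => (p.1 + α₁ + lam * p.2 + φ p.1, α₂ + lam * p.2 + φ p.1)) ''
        {p : ℝ × ℝ | p.2 = ψ p.1} = {p : ℝ × ℝ | p.2 = ψ p.1}) ↔
      ∀ x : ℝ, (1 / (1 + lam)) * g x + (lam / (1 + lam)) * ginv x
        = x + (1 / (1 + lam)) * ((1 - lam) * α₁ + lam * α₂ + φ x) := by
  have hlne : (1 : ℝ) + lam ≠ 0 := by nlinarith [hlam.1]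
  constructor
  · intro hinv x
    -- From invariance, derive the functional equation E at every point.
    have hE : ∀ y : ℝ, α₂ + lam * ψ y + φ y = ψ (y + α₁ + lam * ψ y + φ y) := by
      intro y
      have hmem : ((y + α₁ + lam * ψ y + φ y, α₂ + lam * ψ y + φ y) : ℝ × ℝ) ∈
          {p : ℝ × ℝ | p.2 = ψ p.1} := by
        rw [← hinv]
        exact ⟨(y, ψ y), rfl, rfl⟩
      exact hmem
    -- Apply at ginv x and use g (ginv x) = x.
    have h1 : ginv x + α₁ + lam * ψ (ginv x) + φ (ginv x) = x := by
      have := hright x; rw [hg (ginv x)] at this; linarith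
    have h2 : α₂ + lam * ψ (ginv x) + φ (ginv x) = ψ x := by
      have := hE (ginv x); rw [show ginv x + α₁ + lam * ψ (ginv x) + φ (ginv x) = x from h1] at this
      exact this
    have hginv : ginv x = x - α₁ + α₂ - ψ x := by linarith
    rw [hg x, hginv]
    field_simp
    ring
  · intro hC
    have hlam0 : lam ≠ 0 := ne_of_gt hlam.1
    have hginv : ∀ x, ginv x = x - α₁ + α₂ - ψ x := by
      intro x
      have h := hC x
      rw [hg x] at h
      field_simp at h
      have : lam * ginv x = lam * (x - α₁ + α₂ - ψ x) := by ring_nf; ring_nf at h; linarith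
      exact mul_left_cancel₀ hlam0 this
    have hE : ∀ x, ψ (g x) = α₂ + lam * ψ x + φ x := by
      intro x
      have h := hginv (g x)
      rw [hleft x] at h
      rw [hg x] at h
      rw [hg x]
      linarith
    ext ⟨a, b⟩
    simp only [Set.mem_image, Set.mem_setOf_eq]
    constructor
    · rintro ⟨⟨u, v⟩, hv, heq⟩
      simp only [Set.mem_setOf_eq] at hv
      obtain ⟨h1, h2⟩ := Prod.ext_iff.mp heq
      simp only at h1 h2 hv
      subst hv
      have := hE u
      rw [hg u] at this
      rw [← h1, ← h2]
      simpa using this.symm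
    · intro hb
      refine ⟨(ginv a, ψ (ginv a)), rfl, ?_⟩
      have h1 : ginv a + α₁ + lam * ψ (ginv a) + φ (ginv a) = a := by
        have := hright a; rw [hg (ginv a)] at this; linarith
      have h2 : α₂ + lam * ψ (ginv a) + φ (ginv a) = ψ a := by
        have := hE (ginv a)
        rw [hright a] at this
        exact this.symm
      simp only
      rw [h1, h2, hb]
end
end

section
/- Let d≥1, λ∈(0,1), β∈ℝ^d, and let Φ:ℝ^d→ℝ be C² and ℤ^d-periodic. Let Ψ:ℝ^d→ℝ^d be of the form Ψ(x)=c+Dη(x) with c∈ℝ^d constant and η:ℝ^d→ℝ a C¹ ℤ^d-periodic function. Set g(x):=x+λ(β+Ψ(x)+DΦ(x)) and assume g is a homeomorphism of ℝ^d. Then the graph L={(x,Ψ(x)) : x∈ℝ^d} is invariant under F^♭_{λ,β} if and only if for every x∈ℝ^d: (1/(1+λ))·g(x) + (λ/(1+λ))·g⁻¹(x) = x + (λ/(1+λ))·((1−λ)β + DΦ(x)). -/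
noncomputable section

open Real

/-- The gradient of `f : ℝ^d → ℝ`, as a vector in `ℝ^d`. -/
def gradVec {d : ℕ} (f : (Fin d → ℝ) → ℝ) (x : Fin d → ℝ) : Fin d → ℝ :=
  fun i => fderiv ℝ f x (Pi.single i 1)

/-- `f` is `ℤ^d`-periodic. -/
def ZdPeriodic {d : ℕ} (f : (Fin d → ℝ) → ℝ) : Prop :=
  ∀ (x : Fin d → ℝ) (m : Fin d → ℤ), f (x + fun i => (m i : ℝ)) = f x

theorem herman_formula_dimd (d : ℕ) (hd : 1 ≤ d) (lam : ℝ) (hlam : lam ∈ Set.Ioo (0 : ℝ) 1)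
    (β : Fin d → ℝ) (Φ : (Fin d → ℝ) → ℝ) (hΦ : ContDiff ℝ 2 Φ) (hΦper : ZdPeriodic Φ)
    (c : Fin d → ℝ) (η : (Fin d → ℝ) → ℝ) (hη : ContDiff ℝ 1 η) (hηper : ZdPeriodic η)
    (Ψ : (Fin d → ℝ) → (Fin d → ℝ)) (hΨ : ∀ x, Ψ x = c + gradVec η x)
    (g ginv : (Fin d → ℝ) → (Fin d → ℝ))
    (hg : ∀ x, g x = x + lam • (β + Ψ x + gradVec Φ x))
    -- g is a homeomorphism of ℝ^d with inverse ginv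
    (hgc : Continuous g) (hginvc : Continuous ginv)
    (hleft : ∀ x, ginv (g x) = x) (hright : ∀ x, g (ginv x) = x) :
    ((fun p : (Fin d → ℝ) × (Fin d → ℝ) =>
        (p.1 + lam • (β + p.2 + gradVec Φ p.1), lam • (p.2 + gradVec Φ p.1))) ''
        {p | p.2 = Ψ p.1} = {p | p.2 = Ψ p.1}) ↔
      ∀ x : Fin d → ℝ, (1 / (1 + lam)) • g x + (lam / (1 + lam)) • ginv x
        = x + (lam / (1 + lam)) • ((1 - lam) • β + gradVec Φ x) := by

  obtain ⟨hl0', hl1'⟩ := hlam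
  have hl0 : lam ≠ 0 := ne_of_gt hl0'
  have hl1 : (1 : ℝ) + lam ≠ 0 := by positivity
  -- algebraic identity
  have halg : ∀ x, lam • (Ψ x + gradVec Φ x) = g x - x - lam • β := by
    intro x
    rw [hg]
    funext i
    simp only [Pi.add_apply, Pi.smul_apply, Pi.sub_apply, smul_eq_mul]
    ring
  -- condition A ↔ condition B
  have hAB : (∀ x, lam • (Ψ x + gradVec Φ x) = Ψ (g x)) ↔
      (∀ y, Ψ y = y - ginv y - lam • β) := by
    constructor
    · intro hA y
      have := (hA (ginv y)).symm.trans (halg (ginv y))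
      rw [hright y] at this
      exact this
    · intro hB x
      rw [hB (g x), hleft x, halg x]
  -- condition B ↔ the formula
  have hkey : ∀ x, ((1 / (1 + lam)) • g x + (lam / (1 + lam)) • ginv x
        = x + (lam / (1 + lam)) • ((1 - lam) • β + gradVec Φ x)) ↔
      (Ψ x = x - ginv x - lam • β) := by
    intro x
    rw [hg, funext_iff, funext_iff]
    refine forall_congr' fun i => ?_
    simp only [Pi.add_apply, Pi.smul_apply, Pi.sub_apply, smul_eq_mul]
    constructor
    · intro h
      have h2 : lam * (Ψ x i) = lam * (x i - ginv x i - lam * β i) := by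
        field_simp at h
        ring_nf at h ⊢
        linarith
      exact mul_left_cancel₀ hl0 h2
    · intro h
      rw [h]
      field_simp
      ring
  constructor
  · intro h x
    rw [hkey, ← hAB.1, ]
    · intro x'
      have hmem : ((x' : Fin d → ℝ), Ψ x') ∈ {p : (Fin d → ℝ) × (Fin d → ℝ) | p.2 = Ψ p.1} :=
        rfl
      have : (x' + lam • (β + Ψ x' + gradVec Φ x'), lam • (Ψ x' + gradVec Φ x')) ∈
          {p : (Fin d → ℝ) × (Fin d → ℝ) | p.2 = Ψ p.1} := by
        rw [← h]
        exact ⟨(x', Ψ x'), hmem, rfl⟩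
      have h2 : lam • (Ψ x' + gradVec Φ x') = Ψ (x' + lam • (β + Ψ x' + gradVec Φ x')) := this
      rw [← hg] at h2
      exact h2
  · intro h
    have hA : ∀ x, lam • (Ψ x + gradVec Φ x) = Ψ (g x) :=
      hAB.2 fun y => (hkey y).1 (h y)
    apply Set.Subset.antisymm
    · rintro ⟨a, b⟩ ⟨⟨x, y⟩, hxy, heq⟩
      have hy : y = Ψ x := hxy
      subst hy
      dsimp only at heq ⊢
      obtain ⟨h1, h2⟩ := Prod.mk.injEq _ _ _ _ ▸ heq
      show b = Ψ a
      rw [← h1, ← h2, ← hg]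
      exact hA x
    · rintro ⟨a, b⟩ hb
      have hb' : b = Ψ a := hb
      refine ⟨(ginv a, Ψ (ginv a)), rfl, ?_⟩
      have h1 : ginv a + lam • (β + Ψ (ginv a) + gradVec Φ (ginv a)) = a := by
        rw [← hg, hright]
      have h2 : lam • (Ψ (ginv a) + gradVec Φ (ginv a)) = b := by
        rw [hA (ginv a), hright, hb']
      show (_, _) = (a, b)
      simp only [Prod.mk.injEq]
      exact ⟨h1, h2⟩
end
end

section
/- Let S:ℝ^d×ℝ^d→ℝ be a C² function with S(x+m,X+m)=S(x,X) for all m∈ℤ^d, such that for all (x,X) the matrices ∂²S/∂x²(x,X) and ∂²S/∂X²(x,X) are positive definite and ∂²S/∂x∂X(x,X) is negative definite, and such that S(x,X)/‖x−X‖ → +∞ as ‖x−X‖→∞. Then: (i) for each fixed X∈ℝ^d, the map x ↦ (∂S/∂X)(x,X) is a C¹ diffeomorphism of ℝ^d onto ℝ^d; and (ii) for each fixed x∈ℝ^d, the map X ↦ (∂S/∂x)(x,X) is a C¹ diffeomorphism of ℝ^d onto ℝ^d. -/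
noncomputable section
open Real

lemma sum_smul_single {d : ℕ} (w : Fin d → ℝ) :
    ∑ j, w j • (Pi.single j 1 : Fin d → ℝ) = w := by
  funext i
  rw [Finset.sum_apply]
  simp [Pi.single_apply]

lemma pair_left {d : ℕ} (w : Fin d → ℝ) :
    ((w, 0) : (Fin d → ℝ) × (Fin d → ℝ)) =
      ∑ j, w j • (((Pi.single j 1 : Fin d → ℝ), (0 : Fin d → ℝ)) :
        (Fin d → ℝ) × (Fin d → ℝ)) := by
  apply Prod.ext <;> simp [Prod.fst_sum, Prod.snd_sum, sum_smul_single]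

lemma pair_right {d : ℕ} (w : Fin d → ℝ) :
    (((0 : Fin d → ℝ), w) : (Fin d → ℝ) × (Fin d → ℝ)) =
      ∑ j, w j • ((((0 : Fin d → ℝ)), (Pi.single j 1 : Fin d → ℝ)) :
        (Fin d → ℝ) × (Fin d → ℝ)) := by
  apply Prod.ext <;> simp [Prod.fst_sum, Prod.snd_sum, sum_smul_single]

lemma clm_left {d : ℕ} {M : Type*} [NormedAddCommGroup M] [NormedSpace ℝ M]
    (L : ((Fin d → ℝ) × (Fin d → ℝ)) →L[ℝ] M) (w : Fin d → ℝ) :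
    L (w, 0) = ∑ j, w j • L (Pi.single j 1, 0) := by
  conv_lhs => rw [pair_left w]
  rw [map_sum]
  refine Finset.sum_congr rfl fun j _ => ?_
  exact L.map_smul _ _

lemma clm_right {d : ℕ} {M : Type*} [NormedAddCommGroup M] [NormedSpace ℝ M]
    (L : ((Fin d → ℝ) × (Fin d → ℝ)) →L[ℝ] M) (w : Fin d → ℝ) :
    L (0, w) = ∑ j, w j • L (0, Pi.single j 1) := by
  conv_lhs => rw [pair_right w]
  rw [map_sum]
  refine Finset.sum_congr rfl fun j _ => ?_
  exact L.map_smul _ _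

section deriv
variable {d : ℕ} {F : (Fin d → ℝ) × (Fin d → ℝ) → ℝ}

lemma hasFDerivAt_incl1 (x X : Fin d → ℝ) :
    HasFDerivAt (fun x' : Fin d → ℝ => ((x', X) : (Fin d → ℝ) × (Fin d → ℝ)))
      ((ContinuousLinearMap.id ℝ (Fin d → ℝ)).prod 0) x :=
  HasFDerivAt.prodMk (hasFDerivAt_id x) (hasFDerivAt_const X x)

lemma hasFDerivAt_incl2 (x X : Fin d → ℝ) :
    HasFDerivAt (fun X' : Fin d → ℝ => ((x, X') : (Fin d → ℝ) × (Fin d → ℝ)))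
      ((0 : (Fin d → ℝ) →L[ℝ] (Fin d → ℝ)).prod (ContinuousLinearMap.id ℝ (Fin d → ℝ))) X :=
  HasFDerivAt.prodMk (hasFDerivAt_const x X) (hasFDerivAt_id X)

lemma fderiv_partial1 (hF : ContDiff ℝ 2 F) (x X v : Fin d → ℝ) :
    fderiv ℝ (fun x' => F (x', X)) x v = fderiv ℝ F (x, X) (v, 0) := by
  have h := (((hF.differentiable two_ne_zero) (x, X)).hasFDerivAt).comp x (hasFDerivAt_incl1 x X)
  rw [show (fun x' => F (x', X)) = (F ∘ fun x' : Fin d → ℝ => ((x', X) :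
    (Fin d → ℝ) × (Fin d → ℝ))) from rfl, h.fderiv]
  simp

lemma fderiv_partial2 (hF : ContDiff ℝ 2 F) (x X v : Fin d → ℝ) :
    fderiv ℝ (fun X' => F (x, X')) X v = fderiv ℝ F (x, X) (0, v) := by
  have h := (((hF.differentiable two_ne_zero) (x, X)).hasFDerivAt).comp X (hasFDerivAt_incl2 x X)
  rw [show (fun X' => F (x, X')) = (F ∘ fun X' : Fin d → ℝ => ((x, X') :
    (Fin d → ℝ) × (Fin d → ℝ))) from rfl, h.fderiv]
  simp

lemma fderiv2_partial1 (hF : ContDiff ℝ 2 F) (x X w : Fin d → ℝ)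
    (v : (Fin d → ℝ) × (Fin d → ℝ)) :
    fderiv ℝ (fun x' => fderiv ℝ F (x', X) v) x w
      = fderiv ℝ (fderiv ℝ F) (x, X) (w, 0) v := by
  have hF' : ContDiff ℝ 1 (fderiv ℝ F) := hF.fderiv_right (by norm_num)
  have h2 : HasFDerivAt (fderiv ℝ F) (fderiv ℝ (fderiv ℝ F) (x, X)) (x, X) :=
    ((hF'.differentiable one_ne_zero) (x, X)).hasFDerivAt
  have h := ((ContinuousLinearMap.apply ℝ ℝ v).hasFDerivAt).comp x (h2.comp x (hasFDerivAt_incl1 x X))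
  rw [show (fun x' => fderiv ℝ F (x', X) v)
      = ((ContinuousLinearMap.apply ℝ ℝ v) ∘ (fderiv ℝ F ∘ fun x' : Fin d → ℝ =>
        ((x', X) : (Fin d → ℝ) × (Fin d → ℝ)))) from rfl, h.fderiv]
  simp

lemma fderiv2_partial2 (hF : ContDiff ℝ 2 F) (x X w : Fin d → ℝ)
    (v : (Fin d → ℝ) × (Fin d → ℝ)) :
    fderiv ℝ (fun X' => fderiv ℝ F (x, X') v) X w
      = fderiv ℝ (fderiv ℝ F) (x, X) (0, w) v := by
  have hF' : ContDiff ℝ 1 (fderiv ℝ F) := hF.fderiv_right (by norm_num)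
  have h2 : HasFDerivAt (fderiv ℝ F) (fderiv ℝ (fderiv ℝ F) (x, X)) (x, X) :=
    ((hF'.differentiable one_ne_zero) (x, X)).hasFDerivAt
  have h := ((ContinuousLinearMap.apply ℝ ℝ v).hasFDerivAt).comp X (h2.comp X (hasFDerivAt_incl2 x X))
  rw [show (fun X' => fderiv ℝ F (x, X') v)
      = ((ContinuousLinearMap.apply ℝ ℝ v) ∘ (fderiv ℝ F ∘ fun X' : Fin d → ℝ =>
        ((x, X') : (Fin d → ℝ) × (Fin d → ℝ)))) from rfl, h.fderiv]
  simp

lemma hasDerivAt_curve2 (hF : ContDiff ℝ 2 F) (x Y u : Fin d → ℝ)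
    (v : (Fin d → ℝ) × (Fin d → ℝ)) (t : ℝ) :
    HasDerivAt (fun t : ℝ => fderiv ℝ F (x, Y + t • u) v)
      (fderiv ℝ (fderiv ℝ F) (x, Y + t • u) (0, u) v) t := by
  have hF' : ContDiff ℝ 1 (fderiv ℝ F) := hF.fderiv_right (by norm_num)
  have hc : HasDerivAt (fun t : ℝ => ((x, Y + t • u) : (Fin d → ℝ) × (Fin d → ℝ)))
      ((0 : Fin d → ℝ), u) t := by
    refine HasDerivAt.prodMk (hasDerivAt_const t x) ?_
    simpa using (((hasDerivAt_id t).smul_const u).const_add Y)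
  have h2 : HasFDerivAt (fderiv ℝ F) (fderiv ℝ (fderiv ℝ F) (x, Y + t • u)) (x, Y + t • u) :=
    ((hF'.differentiable one_ne_zero) _).hasFDerivAt
  have := ((ContinuousLinearMap.apply ℝ ℝ v).hasFDerivAt).comp_hasDerivAt t
    (h2.comp_hasDerivAt t hc)
  exact this

lemma hasDerivAt_curve1 (hF : ContDiff ℝ 2 F) (x X u : Fin d → ℝ)
    (v : (Fin d → ℝ) × (Fin d → ℝ)) (t : ℝ) :
    HasDerivAt (fun t : ℝ => fderiv ℝ F (x + t • u, X) v)
      (fderiv ℝ (fderiv ℝ F) (x + t • u, X) (u, 0) v) t := by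
  have hF' : ContDiff ℝ 1 (fderiv ℝ F) := hF.fderiv_right (by norm_num)
  have hc : HasDerivAt (fun t : ℝ => ((x + t • u, X) : (Fin d → ℝ) × (Fin d → ℝ)))
      (u, (0 : Fin d → ℝ)) t := by
    refine HasDerivAt.prodMk ?_ (hasDerivAt_const t X)
    simpa using (((hasDerivAt_id t).smul_const u).const_add x)
  have h2 : HasFDerivAt (fderiv ℝ F) (fderiv ℝ (fderiv ℝ F) (x + t • u, X)) (x + t • u, X) :=
    ((hF'.differentiable one_ne_zero) _).hasFDerivAt
  have := ((ContinuousLinearMap.apply ℝ ℝ v).hasFDerivAt).comp_hasDerivAt t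
    (h2.comp_hasDerivAt t hc)
  exact this

lemma hasDerivAt_curveF (hF : ContDiff ℝ 2 F) (x X u : Fin d → ℝ) (t : ℝ) :
    HasDerivAt (fun t : ℝ => F (x + t • u, X)) (fderiv ℝ F (x + t • u, X) (u, 0)) t := by
  have hc : HasDerivAt (fun t : ℝ => ((x + t • u, X) : (Fin d → ℝ) × (Fin d → ℝ)))
      (u, (0 : Fin d → ℝ)) t := by
    refine HasDerivAt.prodMk ?_ (hasDerivAt_const t X)
    simpa using (((hasDerivAt_id t).smul_const u).const_add x)
  have h2 : HasFDerivAt F (fderiv ℝ F (x + t • u, X)) (x + t • u, X) :=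
    ((hF.differentiable two_ne_zero) _).hasFDerivAt
  exact h2.comp_hasDerivAt t hc

end deriv

set_option maxHeartbeats 1000000 in
open Set Filter in
theorem key {d : ℕ} (F : (Fin d → ℝ) × (Fin d → ℝ) → ℝ)
    (hF : ContDiff ℝ 2 F)
    (hM : ∃ M : ℝ, ∀ y : Fin d → ℝ, F (y, y) ≤ M)
    (hpos : ∀ (p : (Fin d → ℝ) × (Fin d → ℝ)) (w : Fin d → ℝ),
      0 ≤ fderiv ℝ (fderiv ℝ F) p (w, 0) (w, 0))
    (hneg : ∀ (p : (Fin d → ℝ) × (Fin d → ℝ)) (u : Fin d → ℝ), u ≠ 0 →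
      fderiv ℝ (fderiv ℝ F) p (0, u) (u, 0) < 0)
    (hcoer : ∀ A : ℝ, ∃ R : ℝ, ∀ p : (Fin d → ℝ) × (Fin d → ℝ),
      R ≤ ‖p.1 - p.2‖ → A ≤ F p / ‖p.1 - p.2‖)
    (x : Fin d → ℝ) :
    ∃ e : (Fin d → ℝ) ≃ (Fin d → ℝ),
      (∀ X, e X = fun j => fderiv ℝ F (x, X) (Pi.single j 1, 0)) ∧
      ContDiff ℝ 1 ⇑e ∧ ContDiff ℝ 1 ⇑e.symm := by
  obtain ⟨M, hMle⟩ := hM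
  set f : (Fin d → ℝ) → (Fin d → ℝ) := fun X j => fderiv ℝ F (x, X) (Pi.single j 1, 0) with hf_def
  have hF' : ContDiff ℝ 1 (fderiv ℝ F) := hF.fderiv_right (by norm_num)
  set A : (((Fin d → ℝ) × (Fin d → ℝ)) →L[ℝ] ℝ) →L[ℝ] (Fin d → ℝ) :=
    ContinuousLinearMap.pi
      (fun j => ContinuousLinearMap.apply ℝ ℝ ((Pi.single j 1 : (Fin d → ℝ)), (0 : (Fin d → ℝ)))) with hA_def
  -- f is C¹
  have hf1 : ContDiff ℝ 1 f := by
    have : f = fun X => A (fderiv ℝ F (x, X)) := rfl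
    rw [this]
    exact A.contDiff.comp (hF'.comp (contDiff_const.prodMk contDiff_id))
  -- derivative of f
  set D : (Fin d → ℝ) → ((Fin d → ℝ) →L[ℝ] (Fin d → ℝ)) := fun X =>
    A.comp ((fderiv ℝ (fderiv ℝ F) (x, X)).comp
      ((0 : (Fin d → ℝ) →L[ℝ] (Fin d → ℝ)).prod (ContinuousLinearMap.id ℝ (Fin d → ℝ)))) with hD_def
  have hD : ∀ X, HasFDerivAt f (D X) X := by
    intro X
    have h2 : HasFDerivAt (fderiv ℝ F) (fderiv ℝ (fderiv ℝ F) (x, X)) (x, X) :=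
      ((hF'.differentiable one_ne_zero) _).hasFDerivAt
    exact (A.hasFDerivAt).comp X (h2.comp X (hasFDerivAt_incl2 x X))
  have hDapp : ∀ X u j, D X u j = fderiv ℝ (fderiv ℝ F) (x, X) (0, u) (Pi.single j 1, 0) := by
    intro X u j
    simp [hD_def, hA_def, ContinuousLinearMap.pi_apply, ContinuousLinearMap.apply_apply]
  -- strict negativity of the quadratic form of D
  have hquad : ∀ X (u : (Fin d → ℝ)), u ≠ 0 → (∑ j, u j * D X u j) < 0 := by
    intro X u hu
    have hexp : ∑ j, u j * D X u j
        = fderiv ℝ (fderiv ℝ F) (x, X) (0, u) (u, 0) := by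
      rw [clm_left (fderiv ℝ (fderiv ℝ F) (x, X) (0, u)) u]
      refine Finset.sum_congr rfl fun j _ => ?_
      rw [hDapp, smul_eq_mul]
    rw [hexp]
    exact hneg _ u hu
  -- injectivity of D X
  have hDinj : ∀ X, Function.Injective (D X) := by
    intro X u v huv
    by_contra hne
    have h0 : D X (u - v) = 0 := by rw [map_sub, huv, sub_self]
    have := hquad X (u - v) (sub_ne_zero.mpr hne)
    rw [h0] at this
    simp at this
  -- D X as a continuous linear equivalence
  have hDbij : ∀ X, Function.Bijective (D X) := by
    intro X
    have h := hDinj X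
    exact ⟨h, LinearMap.injective_iff_surjective.mp h⟩
  set Φ : (Fin d → ℝ) → ((Fin d → ℝ) ≃L[ℝ] (Fin d → ℝ)) := fun X =>
    LinearEquiv.toContinuousLinearEquiv
      (LinearEquiv.ofBijective ((D X) : (Fin d → ℝ) →ₗ[ℝ] (Fin d → ℝ)) (hDbij X)) with hΦ_def
  have hΦcoe : ∀ X, ((Φ X : (Fin d → ℝ) →L[ℝ] (Fin d → ℝ)) : (Fin d → ℝ) → (Fin d → ℝ)) = D X := fun X => rfl
  have hΦeq : ∀ X, (Φ X : (Fin d → ℝ) →L[ℝ] (Fin d → ℝ)) = D X := fun X =>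
    ContinuousLinearMap.ext fun u => congrFun (hΦcoe X) u
  have hstrict : ∀ X, HasStrictFDerivAt f ((Φ X : (Fin d → ℝ) →L[ℝ] (Fin d → ℝ))) X := by
    intro X
    have hs : HasStrictFDerivAt f (fderiv ℝ f X) X :=
      (hf1.contDiffAt).hasStrictFDerivAt one_ne_zero
    rwa [(hD X).fderiv, ← hΦeq X] at hs
  -- injectivity of f
  have hInj : Function.Injective f := by
    intro X Y hXY
    by_contra hne
    have hu : X - Y ≠ 0 := sub_ne_zero.mpr hne
    set u : (Fin d → ℝ) := X - Y with hu_def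
    have hψ : ∀ t : ℝ, HasDerivAt (fun t : ℝ => fderiv ℝ F (x, Y + t • u) (u, 0))
        (fderiv ℝ (fderiv ℝ F) (x, Y + t • u) (0, u) (u, 0)) t :=
      fun t => hasDerivAt_curve2 hF x Y u (u, 0) t
    have hanti : StrictAnti (fun t : ℝ => fderiv ℝ F (x, Y + t • u) (u, 0)) :=
      strictAnti_of_hasDerivAt_neg hψ (fun t => hneg _ u hu)
    have hlt := hanti (zero_lt_one)
    simp only [zero_smul, add_zero, one_smul] at hlt
    rw [show Y + u = X by rw [hu_def]; abel] at hlt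
    -- but f X = f Y gives equality of these values
    have heq : fderiv ℝ F (x, X) (u, 0) = fderiv ℝ F (x, Y) (u, 0) := by
      rw [clm_left (fderiv ℝ F (x, X)) u, clm_left (fderiv ℝ F (x, Y)) u]
      refine Finset.sum_congr rfl fun j _ => ?_
      have := congrFun hXY j
      simp only [hf_def] at this
      rw [this]
    rw [heq] at hlt
    exact lt_irrefl _ hlt
  -- the convexity bound : F (x, X) ≤ M - ⟪f X, X - x⟫
  have hconv : ∀ X : (Fin d → ℝ), F (x, X) + fderiv ℝ F (x, X) (X - x, 0) ≤ M := by
    intro X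
    set w : (Fin d → ℝ) := X - x with hw_def
    set g : ℝ → ℝ := fun t => F (x + t • w, X) with hg_def
    set h : ℝ → ℝ := fun t => fderiv ℝ F (x + t • w, X) (w, 0) with hh_def
    have hg : ∀ t, HasDerivAt g (h t) t := fun t => hasDerivAt_curveF hF x X w t
    have hh : ∀ t, HasDerivAt h (fderiv ℝ (fderiv ℝ F) (x + t • w, X) (w, 0) (w, 0)) t :=
      fun t => hasDerivAt_curve1 hF x X w (w, 0) t
    have hmono : Monotone h := by
      refine monotone_of_deriv_nonneg (fun t => (hh t).differentiableAt) (fun t => ?_)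
      rw [(hh t).deriv]; exact hpos _ w
    obtain ⟨c, hc, hceq⟩ := exists_hasDerivAt_eq_slope g h zero_lt_one
      (fun t _ => (hg t).continuousAt.continuousWithinAt) (fun t _ => hg t)
    have h0c : h 0 ≤ h c := hmono hc.1.le
    have hslope : h c = g 1 - g 0 := by rw [hceq]; norm_num
    have hg1 : g 1 = F (X, X) := by
      simp only [hg_def, one_smul]
      rw [show x + w = X by rw [hw_def]; abel]
    have hg0 : g 0 = F (x, X) := by simp [hg_def]
    have hh0 : h 0 = fderiv ℝ F (x, X) (w, 0) := by simp [hh_def]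
    have := hMle X
    linarith [hg1, hg0, hh0, h0c, hslope]
  -- pointwise bound on the pairing
  have hpair : ∀ X : (Fin d → ℝ), |fderiv ℝ F (x, X) (X - x, 0)| ≤ (d : ℝ) * ‖f X‖ * ‖X - x‖ := by
    intro X
    set w : (Fin d → ℝ) := X - x with hw_def
    have hsum : fderiv ℝ F (x, X) (w, 0) = ∑ j, w j * f X j := by
      rw [clm_left (fderiv ℝ F (x, X)) w]
      exact Finset.sum_congr rfl fun j _ => by rw [smul_eq_mul]
    rw [hsum]
    calc |∑ j, w j * f X j| ≤ ∑ j, |w j * f X j| := Finset.abs_sum_le_sum_abs _ _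
      _ ≤ ∑ _j : Fin d, ‖f X‖ * ‖w‖ := by
          refine Finset.sum_le_sum fun j _ => ?_
          rw [abs_mul]
          have h1 : |w j| ≤ ‖w‖ := by
            rw [← Real.norm_eq_abs]; exact norm_le_pi_norm w j
          have h2 : |f X j| ≤ ‖f X‖ := by
            rw [← Real.norm_eq_abs]; exact norm_le_pi_norm (f X) j
          calc |w j| * |f X j| ≤ ‖w‖ * ‖f X‖ :=
                mul_le_mul h1 h2 (abs_nonneg _) (norm_nonneg _)
            _ = ‖f X‖ * ‖w‖ := mul_comm _ _
      _ = (d : ℝ) * ‖f X‖ * ‖w‖ := by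
          rw [Finset.sum_const, Finset.card_univ, Fintype.card_fin, nsmul_eq_mul]; ring
  -- preimages of bounded sets are bounded
  have hbdd : ∀ C : ℝ, 0 ≤ C → ∃ r : ℝ, ∀ X : (Fin d → ℝ), ‖f X‖ ≤ C → ‖X - x‖ ≤ r := by
    intro C hC
    obtain ⟨R, hR⟩ := hcoer ((d : ℝ) * C + |M| + 1)
    refine ⟨max R 1, fun X hXC => ?_⟩
    by_contra hcon
    push_neg at hcon
    have hr1 : (1:ℝ) < ‖X - x‖ := lt_of_le_of_lt (le_max_right R 1) hcon
    have hrR : R ≤ ‖x - X‖ := by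
      rw [norm_sub_rev]; exact le_of_lt (lt_of_le_of_lt (le_max_left R 1) hcon)
    have hr0 : (0:ℝ) < ‖x - X‖ := by rw [norm_sub_rev]; linarith
    have hA := hR (x, X) hrR
    rw [le_div_iff₀ hr0] at hA
    have hup : F (x, X) ≤ M + (d : ℝ) * C * ‖X - x‖ := by
      have h1 := hconv X
      have h2 := hpair X
      have h3 : (d : ℝ) * ‖f X‖ * ‖X - x‖ ≤ (d : ℝ) * C * ‖X - x‖ :=
        mul_le_mul_of_nonneg_right
          (mul_le_mul_of_nonneg_left hXC (Nat.cast_nonneg d)) (norm_nonneg _)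
      have habs : -((d : ℝ) * ‖f X‖ * ‖X - x‖) ≤ fderiv ℝ F (x, X) (X - x, 0) :=
        neg_le_of_abs_le h2
      linarith
    rw [norm_sub_rev x X] at hA
    nlinarith [abs_nonneg M, le_abs_self M]
  -- f is proper, hence surjective
  have hcont : Continuous f := hf1.continuous
  have hproper : ∀ K : Set (Fin d → ℝ), IsCompact K → IsCompact (f ⁻¹' K) := by
    intro K hK
    obtain ⟨C, hC0, hCK⟩ : ∃ C : ℝ, 0 ≤ C ∧ ∀ y ∈ K, ‖y‖ ≤ C := by
      obtain ⟨C, hCK⟩ := hK.isBounded.exists_norm_le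
      exact ⟨max C 0, le_max_right C 0, fun y hy => le_trans (hCK y hy) (le_max_left C 0)⟩
    obtain ⟨r, hr⟩ := hbdd C hC0
    have hsub : f ⁻¹' K ⊆ Metric.closedBall x r := by
      intro X hX
      rw [Metric.mem_closedBall, dist_eq_norm]
      exact hr X (hCK (f X) hX)
    exact (isCompact_closedBall x r).of_isClosed_subset
      (hK.isClosed.preimage hcont) hsub
  have hPM : IsProperMap f := isProperMap_iff_isCompact_preimage.mpr ⟨hcont, hproper⟩
  have hopen : IsOpenMap f := isOpenMap_of_hasStrictFDerivAt_equiv (f' := Φ) hstrict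
  have hrange : Set.range f = Set.univ := by
    have hclopen : IsClopen (Set.range f) := ⟨hPM.isClosedMap.isClosed_range, hopen.isOpen_range⟩
    exact hclopen.eq_univ ⟨f x, Set.mem_range_self x⟩
  have hSurj : Function.Surjective f := fun y => by
    have : y ∈ Set.range f := hrange ▸ Set.mem_univ y
    exact this
  -- build the equivalence
  set e : (Fin d → ℝ) ≃ (Fin d → ℝ) := Equiv.ofBijective f ⟨hInj, hSurj⟩ with he_def
  refine ⟨e, fun X => rfl, hf1, ?_⟩
  rw [contDiff_iff_contDiffAt]
  intro p
  obtain ⟨X, rfl⟩ := hSurj p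
  have hfa : ContDiffAt ℝ 1 f X := hf1.contDiffAt
  have hfd : HasFDerivAt f ((Φ X : (Fin d → ℝ) →L[ℝ] (Fin d → ℝ))) X := (hstrict X).hasFDerivAt
  have hli : ContDiffAt ℝ 1 (hfa.localInverse hfd one_ne_zero) (f X) :=
    hfa.to_localInverse hfd one_ne_zero
  have hev : ⇑e.symm =ᶠ[nhds (f X)] hfa.localInverse hfd one_ne_zero := by
    have hri := (hfa.hasStrictFDerivAt' hfd one_ne_zero).eventually_right_inverse
    filter_upwards [hri] with y hy
    have hy' : f (hfa.localInverse hfd one_ne_zero y) = y := hy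
    conv_lhs => rw [← hy']
    exact e.symm_apply_apply _
  exact hli.congr_of_eventuallyEq hev

-- now copy the defs from the problem statement
/-- Partial gradient of `S` in the first `ℝ^d`-variable. -/
def grad1 {d : ℕ} (S : (Fin d → ℝ) → (Fin d → ℝ) → ℝ) (x X : Fin d → ℝ) : Fin d → ℝ :=
  fun i => fderiv ℝ (fun x' => S x' X) x (Pi.single i 1)

/-- Partial gradient of `S` in the second `ℝ^d`-variable. -/
def grad2 {d : ℕ} (S : (Fin d → ℝ) → (Fin d → ℝ) → ℝ) (x X : Fin d → ℝ) : Fin d → ℝ :=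
  fun i => fderiv ℝ (fun X' => S x X') X (Pi.single i 1)

/-- The Hessian block `∂²S/∂x²(x,X)`. -/
def hessXX {d : ℕ} (S : (Fin d → ℝ) → (Fin d → ℝ) → ℝ) (x X : Fin d → ℝ) :
    Matrix (Fin d) (Fin d) ℝ :=
  Matrix.of fun i j => fderiv ℝ (fun x' => grad1 S x' X j) x (Pi.single i 1)

/-- The Hessian block `∂²S/∂X²(x,X)`. -/
def hessYY {d : ℕ} (S : (Fin d → ℝ) → (Fin d → ℝ) → ℝ) (x X : Fin d → ℝ) :
    Matrix (Fin d) (Fin d) ℝ :=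
  Matrix.of fun i j => fderiv ℝ (fun X' => grad2 S x X' j) X (Pi.single i 1)

/-- The mixed Hessian block `∂²S/∂x∂X(x,X)`. -/
def hessXY {d : ℕ} (S : (Fin d → ℝ) → (Fin d → ℝ) → ℝ) (x X : Fin d → ℝ) :
    Matrix (Fin d) (Fin d) ℝ :=
  Matrix.of fun i j => fderiv ℝ (fun x' => grad2 S x' X j) x (Pi.single i 1)

section glue
variable {d : ℕ} {S : (Fin d → ℝ) → (Fin d → ℝ) → ℝ}

lemma grad1_eq (hS : ContDiff ℝ 2 fun p : (Fin d → ℝ) × (Fin d → ℝ) => S p.1 p.2)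
    (x X : Fin d → ℝ) (j : Fin d) :
    grad1 S x X j = fderiv ℝ (fun p : (Fin d → ℝ) × (Fin d → ℝ) => S p.1 p.2) (x, X)
      (Pi.single j 1, 0) :=
  fderiv_partial1 hS x X _

lemma grad2_eq (hS : ContDiff ℝ 2 fun p : (Fin d → ℝ) × (Fin d → ℝ) => S p.1 p.2)
    (x X : Fin d → ℝ) (j : Fin d) :
    grad2 S x X j = fderiv ℝ (fun p : (Fin d → ℝ) × (Fin d → ℝ) => S p.1 p.2) (x, X)
      (0, Pi.single j 1) :=
  fderiv_partial2 hS x X _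

lemma hessXX_apply (hS : ContDiff ℝ 2 fun p : (Fin d → ℝ) × (Fin d → ℝ) => S p.1 p.2)
    (x X : Fin d → ℝ) (i j : Fin d) :
    hessXX S x X i j = fderiv ℝ (fderiv ℝ (fun p : (Fin d → ℝ) × (Fin d → ℝ) => S p.1 p.2))
      (x, X) (Pi.single i 1, 0) (Pi.single j 1, 0) := by
  have h : (fun x' => grad1 S x' X j)
      = fun x' => fderiv ℝ (fun p : (Fin d → ℝ) × (Fin d → ℝ) => S p.1 p.2) (x', X)
        (Pi.single j 1, 0) := funext fun x' => grad1_eq hS x' X j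
  show fderiv ℝ (fun x' => grad1 S x' X j) x (Pi.single i 1) = _
  rw [h]
  exact fderiv2_partial1 hS x X _ _

lemma hessXY_apply (hS : ContDiff ℝ 2 fun p : (Fin d → ℝ) × (Fin d → ℝ) => S p.1 p.2)
    (x X : Fin d → ℝ) (i j : Fin d) :
    hessXY S x X i j = fderiv ℝ (fderiv ℝ (fun p : (Fin d → ℝ) × (Fin d → ℝ) => S p.1 p.2))
      (x, X) (Pi.single i 1, 0) (0, Pi.single j 1) := by
  have h : (fun x' => grad2 S x' X j)
      = fun x' => fderiv ℝ (fun p : (Fin d → ℝ) × (Fin d → ℝ) => S p.1 p.2) (x', X)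
        (0, Pi.single j 1) := funext fun x' => grad2_eq hS x' X j
  show fderiv ℝ (fun x' => grad2 S x' X j) x (Pi.single i 1) = _
  rw [h]
  exact fderiv2_partial1 hS x X _ _

lemma hessYX_apply (hS : ContDiff ℝ 2 fun p : (Fin d → ℝ) × (Fin d → ℝ) => S p.1 p.2)
    (x X : Fin d → ℝ) (i j : Fin d) :
    fderiv ℝ (fun X' => grad1 S x X' j) X (Pi.single i 1)
      = fderiv ℝ (fderiv ℝ (fun p : (Fin d → ℝ) × (Fin d → ℝ) => S p.1 p.2))
        (x, X) (0, Pi.single i 1) (Pi.single j 1, 0) := by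
  have h : (fun X' => grad1 S x X' j)
      = fun X' => fderiv ℝ (fun p : (Fin d → ℝ) × (Fin d → ℝ) => S p.1 p.2) (x, X')
        (Pi.single j 1, 0) := funext fun X' => grad1_eq hS x X' j
  rw [h]
  exact fderiv2_partial2 hS x X _ _

lemma expand_LR (B : ((Fin d → ℝ) × (Fin d → ℝ)) →L[ℝ]
      (((Fin d → ℝ) × (Fin d → ℝ)) →L[ℝ] ℝ)) (u v : Fin d → ℝ) :
    B (u, 0) (0, v) = ∑ i, ∑ j, u i * v j * B (Pi.single i 1, 0) (0, Pi.single j 1) := by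
  rw [clm_left B u, ContinuousLinearMap.sum_apply]
  refine Finset.sum_congr rfl fun i _ => ?_
  rw [ContinuousLinearMap.smul_apply, clm_right (B (Pi.single i 1, 0)) v, Finset.smul_sum]
  refine Finset.sum_congr rfl fun j _ => ?_
  simp only [smul_eq_mul]; ring

lemma expand_LL (B : ((Fin d → ℝ) × (Fin d → ℝ)) →L[ℝ]
      (((Fin d → ℝ) × (Fin d → ℝ)) →L[ℝ] ℝ)) (u v : Fin d → ℝ) :
    B (u, 0) (v, 0) = ∑ i, ∑ j, u i * v j * B (Pi.single i 1, 0) (Pi.single j 1, 0) := by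
  rw [clm_left B u, ContinuousLinearMap.sum_apply]
  refine Finset.sum_congr rfl fun i _ => ?_
  rw [ContinuousLinearMap.smul_apply, clm_left (B (Pi.single i 1, 0)) v, Finset.smul_sum]
  refine Finset.sum_congr rfl fun j _ => ?_
  simp only [smul_eq_mul]; ring

lemma qf_posdef {M : Matrix (Fin d) (Fin d) ℝ} (hM : M.PosDef) {u : Fin d → ℝ} (hu : u ≠ 0) :
    0 < ∑ i, ∑ j, u i * u j * M i j := by
  have h := hM.dotProduct_mulVec_pos hu
  have heq : dotProduct (star u) (M.mulVec u) = ∑ i, ∑ j, u i * u j * M i j := by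
    simp only [dotProduct, Matrix.mulVec, Finset.mul_sum, Pi.star_apply, star_trivial]
    exact Finset.sum_congr rfl fun i _ => Finset.sum_congr rfl fun j _ => by ring
  rwa [heq] at h

lemma hpos_trans (hS : ContDiff ℝ 2 fun p : (Fin d → ℝ) × (Fin d → ℝ) => S p.1 p.2)
    (hpos1 : ∀ x X : Fin d → ℝ, (hessXX S x X).PosDef) :
    ∀ (p : (Fin d → ℝ) × (Fin d → ℝ)) (w : Fin d → ℝ),
      0 ≤ fderiv ℝ (fderiv ℝ (fun p : (Fin d → ℝ) × (Fin d → ℝ) => S p.1 p.2)) p (w, 0) (w, 0) := by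
  rintro ⟨a, b⟩ w
  by_cases hw : w = 0
  · simp [hw, Prod.mk_zero_zero]
  · have hexp : fderiv ℝ (fderiv ℝ (fun p : (Fin d → ℝ) × (Fin d → ℝ) => S p.1 p.2)) (a, b)
        (w, 0) (w, 0) = ∑ i, ∑ j, w i * w j * hessXX S a b i j := by
      rw [expand_LL _ w w]
      exact Finset.sum_congr rfl fun i _ => Finset.sum_congr rfl fun j _ => by
        rw [hessXX_apply hS a b i j]
    rw [hexp]
    exact (qf_posdef (hpos1 a b) hw).le

lemma hneg_transA (hS : ContDiff ℝ 2 fun p : (Fin d → ℝ) × (Fin d → ℝ) => S p.1 p.2)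
    (hneg : ∀ x X : Fin d → ℝ, (-(hessXY S x X)).PosDef) :
    ∀ (p : (Fin d → ℝ) × (Fin d → ℝ)) (u : Fin d → ℝ), u ≠ 0 →
      fderiv ℝ (fderiv ℝ (fun p : (Fin d → ℝ) × (Fin d → ℝ) => S p.1 p.2)) p (0, u) (u, 0) < 0 := by
  rintro ⟨a, b⟩ u hu
  have hsym := (hS.contDiffAt (x := (a, b))).isSymmSndFDerivAt (by simp)
  rw [hsym (0, u) (u, 0), expand_LR _ u u]
  have hexp : ∑ i, ∑ j, u i * u j *
      fderiv ℝ (fderiv ℝ (fun p : (Fin d → ℝ) × (Fin d → ℝ) => S p.1 p.2)) (a, b)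
        (Pi.single i 1, 0) (0, Pi.single j 1)
      = ∑ i, ∑ j, u i * u j * hessXY S a b i j :=
    Finset.sum_congr rfl fun i _ => Finset.sum_congr rfl fun j _ => by
      rw [← hessXY_apply hS a b i j]
  rw [hexp]
  have hq := qf_posdef (hneg a b) hu
  have hneg' : ∑ i, ∑ j, u i * u j * (-(hessXY S a b)) i j
      = -∑ i, ∑ j, u i * u j * hessXY S a b i j := by
    simp [Matrix.neg_apply, mul_neg, Finset.sum_neg_distrib]
  rw [hneg'] at hq
  linarith

end glue

section glue2
variable {d : ℕ} {S : (Fin d → ℝ) → (Fin d → ℝ) → ℝ}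

lemma hneg_transB (hS : ContDiff ℝ 2 fun p : (Fin d → ℝ) × (Fin d → ℝ) => S p.1 p.2)
    (hneg : ∀ x X : Fin d → ℝ, (-(hessXY S x X)).PosDef) :
    ∀ (p : (Fin d → ℝ) × (Fin d → ℝ)) (u : Fin d → ℝ), u ≠ 0 →
      fderiv ℝ (fderiv ℝ (fun p : (Fin d → ℝ) × (Fin d → ℝ) => S p.2 p.1)) p (0, u) (u, 0) < 0 := by
  rintro ⟨a, b⟩ u hu
  have hT : ContDiff ℝ 2 (fun p : (Fin d → ℝ) × (Fin d → ℝ) => S p.2 p.1) :=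
    hS.comp (contDiff_snd.prodMk contDiff_fst)
  have hsymT := (hT.contDiffAt (x := (a, b))).isSymmSndFDerivAt (by simp)
  rw [hsymT (0, u) (u, 0), expand_LR _ u u]
  have hsymS := (hS.contDiffAt (x := (b, a))).isSymmSndFDerivAt (by simp)
  have hent : ∀ i j : Fin d,
      fderiv ℝ (fderiv ℝ (fun p : (Fin d → ℝ) × (Fin d → ℝ) => S p.2 p.1)) (a, b)
        (Pi.single i 1, 0) (0, Pi.single j 1) = hessXY S b a j i := by
    intro i j
    have h1 : fderiv ℝ (fderiv ℝ (fun p : (Fin d → ℝ) × (Fin d → ℝ) => S p.2 p.1)) (a, b)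
          (Pi.single i 1, 0) (0, Pi.single j 1)
        = hessXY (fun a b => S b a) a b i j :=
      (hessXY_apply (S := fun a b => S b a) hT a b i j).symm
    have h2 : hessXY (fun a b => S b a) a b i j
        = fderiv ℝ (fun X' => grad1 S b X' j) a (Pi.single i 1) := rfl
    have h3 := hessYX_apply hS b a i j
    have h4 : fderiv ℝ (fderiv ℝ (fun p : (Fin d → ℝ) × (Fin d → ℝ) => S p.1 p.2)) (b, a)
          (0, Pi.single i 1) (Pi.single j 1, 0)
        = fderiv ℝ (fderiv ℝ (fun p : (Fin d → ℝ) × (Fin d → ℝ) => S p.1 p.2)) (b, a)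
          (Pi.single j 1, 0) (0, Pi.single i 1) := hsymS _ _
    have h5 := (hessXY_apply hS b a j i).symm
    exact h1.trans (h2.trans (h3.trans (h4.trans h5)))
  have hexp : ∑ i, ∑ j, u i * u j *
      fderiv ℝ (fderiv ℝ (fun p : (Fin d → ℝ) × (Fin d → ℝ) => S p.2 p.1)) (a, b)
        (Pi.single i 1, 0) (0, Pi.single j 1)
      = ∑ i, ∑ j, u i * u j * hessXY S b a j i :=
    Finset.sum_congr rfl fun i _ => Finset.sum_congr rfl fun j _ => by rw [hent i j]
  rw [hexp]
  have hswap : ∑ i, ∑ j, u i * u j * hessXY S b a j i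
      = ∑ i, ∑ j, u i * u j * hessXY S b a i j := by
    rw [Finset.sum_comm]
    exact Finset.sum_congr rfl fun i _ => Finset.sum_congr rfl fun j _ => by ring
  rw [hswap]
  have hq := qf_posdef (hneg b a) hu
  have hneg' : ∑ i, ∑ j, u i * u j * (-(hessXY S b a)) i j
      = -∑ i, ∑ j, u i * u j * hessXY S b a i j := by
    simp [Matrix.neg_apply, mul_neg, Finset.sum_neg_distrib]
  rw [hneg'] at hq
  linarith

lemma diag_bound (hS : ContDiff ℝ 2 fun p : (Fin d → ℝ) × (Fin d → ℝ) => S p.1 p.2)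
    (hSper : ∀ (x X : Fin d → ℝ) (m : Fin d → ℤ),
      S (x + fun i => (m i : ℝ)) (X + fun i => (m i : ℝ)) = S x X) :
    ∃ M : ℝ, ∀ y : Fin d → ℝ, S y y ≤ M := by
  have hc : Continuous fun y : Fin d → ℝ => S y y :=
    hS.continuous.comp (continuous_id.prodMk continuous_id)
  have hK : IsCompact (Set.Icc (0 : Fin d → ℝ) 1) := isCompact_Icc
  have hne : (Set.Icc (0 : Fin d → ℝ) 1).Nonempty :=
    ⟨0, Set.mem_Icc.mpr ⟨le_refl 0, zero_le_one⟩⟩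
  obtain ⟨y₀, _, hmax⟩ := hK.exists_isMaxOn hne hc.continuousOn
  refine ⟨S y₀ y₀, fun y => ?_⟩
  have hper := hSper (fun i => Int.fract (y i)) (fun i => Int.fract (y i)) (fun i => ⌊y i⌋)
  have hy : ((fun i => Int.fract (y i)) + fun i => ((⌊y i⌋ : ℤ) : ℝ)) = y := by
    funext i
    exact Int.fract_add_floor (y i)
  rw [hy] at hper
  rw [hper]
  refine hmax ?_
  show _ ∈ Set.Icc _ _
  rw [Set.mem_Icc]
  exact ⟨fun i => Int.fract_nonneg (y i), fun i => (Int.fract_lt_one (y i)).le⟩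

end glue2

theorem partial_gradients_are_diffeos (d : ℕ) (S : (Fin d → ℝ) → (Fin d → ℝ) → ℝ)
    (hS : ContDiff ℝ 2 (fun p : (Fin d → ℝ) × (Fin d → ℝ) => S p.1 p.2))
    (hSper : ∀ (x X : Fin d → ℝ) (m : Fin d → ℤ),
      S (x + fun i => (m i : ℝ)) (X + fun i => (m i : ℝ)) = S x X)
    (hpos1 : ∀ x X : Fin d → ℝ, (hessXX S x X).PosDef)
    (hpos2 : ∀ x X : Fin d → ℝ, (hessYY S x X).PosDef)
    (hneg : ∀ x X : Fin d → ℝ, (-(hessXY S x X)).PosDef)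
    (hcoer : ∀ A : ℝ, ∃ R : ℝ, ∀ x X : Fin d → ℝ, R ≤ ‖x - X‖ → A ≤ S x X / ‖x - X‖) :
    (∀ X : Fin d → ℝ, ∃ e : (Fin d → ℝ) ≃ (Fin d → ℝ),
      (∀ x, e x = grad2 S x X) ∧ ContDiff ℝ 1 (e : (Fin d → ℝ) → (Fin d → ℝ)) ∧
        ContDiff ℝ 1 (e.symm : (Fin d → ℝ) → (Fin d → ℝ))) ∧
    (∀ x : Fin d → ℝ, ∃ e : (Fin d → ℝ) ≃ (Fin d → ℝ),
      (∀ X, e X = grad1 S x X) ∧ ContDiff ℝ 1 (e : (Fin d → ℝ) → (Fin d → ℝ)) ∧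
        ContDiff ℝ 1 (e.symm : (Fin d → ℝ) → (Fin d → ℝ))) := by
  have hT : ContDiff ℝ 2 (fun p : (Fin d → ℝ) × (Fin d → ℝ) => S p.2 p.1) :=
    hS.comp (contDiff_snd.prodMk contDiff_fst)
  obtain ⟨M, hM⟩ := diag_bound hS hSper
  constructor
  · intro X
    have hpos2' : ∀ a b : Fin d → ℝ, (hessXX (fun a b => S b a) a b).PosDef :=
      fun a b => hpos2 b a
    obtain ⟨e, he, h1, h2⟩ := key (fun p : (Fin d → ℝ) × (Fin d → ℝ) => S p.2 p.1) hT
      ⟨M, fun y => hM y⟩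
      (hpos_trans (S := fun a b => S b a) hT hpos2')
      (hneg_transB hS hneg)
      (by
        intro A
        obtain ⟨R, hR⟩ := hcoer A
        refine ⟨R, fun p hp => ?_⟩
        rw [norm_sub_rev] at hp ⊢
        exact hR p.2 p.1 hp) X
    refine ⟨e, fun x' => ?_, h1, h2⟩
    rw [he x']
    funext j
    exact (fderiv_partial1 hT X x' (Pi.single j 1)).symm
  · intro x
    obtain ⟨e, he, h1, h2⟩ := key (fun p : (Fin d → ℝ) × (Fin d → ℝ) => S p.1 p.2) hS
      ⟨M, hM⟩
      (hpos_trans hS hpos1)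
      (hneg_transA hS hneg)
      (by
        intro A
        obtain ⟨R, hR⟩ := hcoer A
        exact ⟨R, fun p hp => hR p.1 p.2 hp⟩) x
    refine ⟨e, fun X => ?_, h1, h2⟩
    rw [he X]
    funext j
    exact (fderiv_partial1 hS x X (Pi.single j 1)).symm
end
end

section
/- Let λ∈(0,1), α=(α₁,α₂)∈ℝ², and let φ:ℝ→ℝ be C¹, 1-periodic with ∫₀¹ φ(x)dx=0. Set M:=max_{x∈[0,1]} φ′(x) and m:=min_{x∈[0,1]} φ′(x) (so m≤0≤M). If the perturbed map F^♭_{λ,α}(x,y)=(x+α₁+λy+φ(x), α₂+λy+φ(x)) admits a C⁰-invariant graph, then m > −(1+λ) and (1 + m/(1+λ))⁻¹ ≤ max{ (1+λ)/2 + M/2 + ((1−λ)²/4 + M²/4 + (1+λ)M/2)^{1/2}, (1/(2λ))·(1+λ+M+((1+λ+M)²−4λ)^{1/2}) }. -/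
noncomputable section

open Real MeasureTheory

/-- `F` admits a `C⁰`-invariant graph `Γ = {(x, ψ x)}` with `ψ` continuous and `1`-periodic. -/
def HasInvGraph (F : ℝ × ℝ → ℝ × ℝ) : Prop :=
  ∃ ψ : ℝ → ℝ, Continuous ψ ∧ (∀ x, ψ (x + 1) = ψ x) ∧
    F '' {p : ℝ × ℝ | p.2 = ψ p.1} = {p : ℝ × ℝ | p.2 = ψ p.1}

/-- Solutions of the quadratic inequality `X² - K X + λ ≤ 0` lie between the roots. -/
lemma quad_bounds (lam A X K : ℝ) (hA2 : A ^ 2 - K * A + lam = 0) (hAge : K - A ≤ A)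
    (hX : X ^ 2 - K * X + lam ≤ 0) : K - A ≤ X ∧ X ≤ A := by
  constructor
  · by_contra h
    push_neg at h
    have h1 : X - A < 0 := by linarith
    have h2 : X - (K - A) < 0 := by linarith
    nlinarith [mul_pos_of_neg_of_neg h1 h2]
  · by_contra h
    push_neg at h
    have h1 : X - A > 0 := by linarith
    have h2 : X - (K - A) > 0 := by linarith
    nlinarith [mul_pos h1 h2]

/-- A continuous function commuting with `x ↦ x + 1` by `f (x+1) = f x + 1` is surjective. -/
lemma surj_of_translation (f : ℝ → ℝ) (hc : Continuous f)
    (B : ℝ) (hB : ∀ x, |f x - x| ≤ B) : Function.Surjective f := by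
  apply hc.surjective
  · apply Filter.tendsto_atTop_mono (f := fun x : ℝ => x + -B)
    · intro x
      show x + -B ≤ f x
      have := (abs_le.mp (hB x)).1
      linarith
    · exact Filter.tendsto_atTop_add_const_right _ _ Filter.tendsto_id
  · apply Filter.tendsto_atBot_mono (g := f) (f := fun x : ℝ => x + B)
    · intro x
      show f x ≤ x + B
      have := (abs_le.mp (hB x)).2
      linarith
    · exact Filter.tendsto_atBot_add_const_right _ _ Filter.tendsto_id

/-- A continuous `1`-periodic function is bounded. -/
lemma periodic_bound (v : ℝ → ℝ) (hc : Continuous v) (hper : ∀ x, v (x + 1) = v x) :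
    ∃ B, ∀ x, |v x| ≤ B := by
  obtain ⟨C, hC⟩ := (isCompact_Icc (a := (0:ℝ)) (b := 1)).exists_bound_of_continuousOn
    hc.continuousOn
  refine ⟨C, fun x => ?_⟩
  have hp : Function.Periodic v 1 := hper
  have h2 := hp.sub_int_mul_eq (x := x) ⌊x⌋
  rw [mul_one] at h2
  have hm : x - (⌊x⌋ : ℝ) ∈ Set.Icc (0:ℝ) 1 := by
    constructor
    · linarith [Int.floor_le x]
    · linarith [Int.lt_floor_add_one x]
  have := hC _ hm
  rw [h2] at this
  simpa using this

set_option maxHeartbeats 1000000 in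
theorem criterion_dim1 (lam α₁ α₂ : ℝ) (hlam : lam ∈ Set.Ioo (0 : ℝ) 1)
    (φ : ℝ → ℝ) (hφ : ContDiff ℝ 1 φ) (hφper : ∀ x, φ (x + 1) = φ x)
    (hφavg : (∫ x in (0 : ℝ)..1, φ x) = 0)
    (M m : ℝ)
    -- M = max_{[0,1]} φ′ and m = min_{[0,1]} φ′
    (hM₁ : ∀ x ∈ Set.Icc (0 : ℝ) 1, deriv φ x ≤ M) (hM₂ : ∃ x ∈ Set.Icc (0 : ℝ) 1, deriv φ x = M)
    (hm₁ : ∀ x ∈ Set.Icc (0 : ℝ) 1, m ≤ deriv φ x) (hm₂ : ∃ x ∈ Set.Icc (0 : ℝ) 1, deriv φ x = m)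
    (hinv : HasInvGraph (fun p : ℝ × ℝ =>
      (p.1 + α₁ + lam * p.2 + φ p.1, α₂ + lam * p.2 + φ p.1))) :
    -(1 + lam) < m ∧
      (1 + m / (1 + lam))⁻¹ ≤
        max ((1 + lam) / 2 + M / 2 +
              Real.sqrt ((1 - lam) ^ 2 / 4 + M ^ 2 / 4 + (1 + lam) * M / 2))
          ((1 / (2 * lam)) * (1 + lam + M + Real.sqrt ((1 + lam + M) ^ 2 - 4 * lam))) := by
  obtain ⟨hlam0, hlam1⟩ := hlam
  obtain ⟨ψ, hψc, hψper, hΓ⟩ := hinv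
  have hφc : Continuous φ := hφ.continuous
  have hφd : Differentiable ℝ φ := hφ.differentiable one_ne_zero
  have hφ'c : Continuous (deriv φ) := hφ.continuous_deriv le_rfl
  -- the derivative of φ is 1-periodic
  have hper' : ∀ x, deriv φ (x + 1) = deriv φ x := by
    intro x
    have h1 : deriv (fun y => φ (y + 1)) x = deriv φ x := by
      congr 1; ext y; exact hφper y
    rw [← h1, deriv_comp_add_const]
  -- global upper bound for deriv φ
  have hub : ∀ y, deriv φ y ≤ M := by
    intro y
    have hp : Function.Periodic (deriv φ) 1 := hper'
    have h2 := hp.sub_int_mul_eq (x := y) ⌊y⌋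
    rw [mul_one] at h2
    rw [← h2]
    apply hM₁
    constructor
    · linarith [Int.floor_le y]
    · linarith [Int.lt_floor_add_one y]
  -- M ≥ 0
  have hM0 : 0 ≤ M := by
    obtain ⟨c, hc, hc'⟩ := exists_deriv_eq_slope φ (by norm_num : (0:ℝ) < 1)
      hφc.continuousOn (hφd.differentiableOn)
    have h10 : φ 1 = φ 0 := by simpa using hφper 0
    have : deriv φ c = 0 := by rw [hc']; rw [h10]; ring
    have := hM₁ c ⟨hc.1.le, hc.2.le⟩
    linarith
  -- slope upper bound for φ
  have hslopeU : ∀ x x' : ℝ, x < x' → φ x' - φ x ≤ M * (x' - x) := by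
    intro x x' hxx
    obtain ⟨c, _, hc'⟩ := exists_deriv_eq_slope φ hxx hφc.continuousOn hφd.differentiableOn
    have hD : 0 < x' - x := by linarith
    have := hub c
    rw [hc'] at this
    calc φ x' - φ x = (φ x' - φ x) / (x' - x) * (x' - x) := by field_simp
    _ ≤ M * (x' - x) := by
        apply mul_le_mul_of_nonneg_right this hD.le
  -- the circle maps g and h
  obtain ⟨g, hgdef⟩ : ∃ g : ℝ → ℝ, ∀ x, g x = x + α₁ + lam * ψ x + φ x :=
    ⟨fun x => x + α₁ + lam * ψ x + φ x, fun _ => rfl⟩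
  obtain ⟨h, hhdef⟩ : ∃ h : ℝ → ℝ, ∀ u, h u = u - α₁ + α₂ - ψ u :=
    ⟨fun u => u - α₁ + α₂ - ψ u, fun _ => rfl⟩
  have hgc : Continuous g := by
    have hfe : g = fun x => x + α₁ + lam * ψ x + φ x := funext hgdef
    rw [hfe]
    exact ((continuous_id.add continuous_const).add (continuous_const.mul hψc)).add hφc
  -- the functional equation from invariance
  have hfun : ∀ x, ψ (g x) = α₂ + lam * ψ x + φ x := by
    intro x
    have hx : (x, ψ x) ∈ {p : ℝ × ℝ | p.2 = ψ p.1} := rfl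
    have hmem : ((x, ψ x).1 + α₁ + lam * (x, ψ x).2 + φ (x, ψ x).1,
        α₂ + lam * (x, ψ x).2 + φ (x, ψ x).1) ∈ {p : ℝ × ℝ | p.2 = ψ p.1} := by
      rw [← hΓ]
      exact Set.mem_image_of_mem _ hx
    rw [hgdef]
    exact hmem.symm
  have hleft : ∀ x, h (g x) = x := by
    intro x
    rw [hhdef, hfun x, hgdef]
    ring
  have hginj : Function.Injective g := Function.LeftInverse.injective hleft
  -- g is surjective
  have hgB : ∃ B, ∀ x, |g x - x| ≤ B := by
    apply periodic_bound (fun x => α₁ + lam * ψ x + φ x)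
      ((continuous_const.add (continuous_const.mul hψc)).add hφc)
      (fun x => by simp [hψper x, hφper x])
    |>.imp
    intro B hB x
    have hfe : g x - x = α₁ + lam * ψ x + φ x := by rw [hgdef]; ring
    rw [hfe]; exact hB x
  obtain ⟨B, hB⟩ := hgB
  have hgsurj : Function.Surjective g := surj_of_translation g hgc B hB
  have hright : ∀ u, g (h u) = u := by
    intro u
    obtain ⟨x, hx⟩ := hgsurj u
    rw [← hx, hleft]
  -- g is strictly increasing
  have hgper : ∀ x, g (x + 1) = g x + 1 := by
    intro x
    rw [hgdef, hgdef, hψper, hφper]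
    ring
  have hsm : StrictMono g := by
    rcases hgc.strictMono_of_inj hginj with hs | hs
    · exact hs
    · exfalso
      have h1 : g 1 = g 0 + 1 := by simpa using hgper 0
      have := hs (show (0:ℝ) < 1 by norm_num)
      linarith
  have hhsm : StrictMono h := by
    intro u u' huu
    by_contra hcon
    push_neg at hcon
    have := hsm.le_iff_le.mpr hcon
    rw [hright, hright] at this
    exact absurd this (not_le.mpr huu)
  -- key identity
  have hiden : ∀ x x' : ℝ, g x' - g x
      = (1 + lam) * (x' - x) - lam * (h x' - h x) + (φ x' - φ x) := by
    intro x x'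
    rw [hgdef x, hgdef x', hhdef x, hhdef x']
    ring
  obtain ⟨K, hKdef⟩ : ∃ K : ℝ, K = 1 + lam + M := ⟨_, rfl⟩
  have hK0 : 0 < K := by rw [hKdef]; linarith
  have keyU : ∀ x x' : ℝ, x < x' →
      g x' - g x ≤ K * (x' - x) - lam * (h x' - h x) := by
    intro x x' hxx
    have h1 := hiden x x'
    have h2 := hslopeU x x' hxx
    rw [hKdef]
    nlinarith
  -- the set of difference quotients of g
  obtain ⟨Rset, hRdef⟩ : ∃ R : Set ℝ, R = {r | ∃ x x' : ℝ, x < x' ∧ r = (g x' - g x) / (x' - x)} :=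
    ⟨_, rfl⟩
  have memR : ∀ x x' : ℝ, x < x' → (g x' - g x) / (x' - x) ∈ Rset := by
    intro x x' hxx
    rw [hRdef]
    exact ⟨x, x', hxx, rfl⟩
  have memR' : ∀ x x' : ℝ, x < x' → (x' - x) / (h x' - h x) ∈ Rset := by
    intro x x' hxx
    have e1 : g (h x) = x := hright x
    have e2 : g (h x') = x' := hright x'
    rw [hRdef]
    exact ⟨h x, h x', hhsm hxx, by rw [e1, e2]⟩
  have Rpos : ∀ r ∈ Rset, 0 < r := by
    intro r hr
    rw [hRdef] at hr
    obtain ⟨x, x', hxx, rfl⟩ := hr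
    exact div_pos (sub_pos.mpr (hsm hxx)) (sub_pos.mpr hxx)
  have Rne : Rset.Nonempty := ⟨_, memR 0 1 one_pos⟩
  have bddA : BddAbove Rset := by
    refine ⟨K, ?_⟩
    intro r hr
    rw [hRdef] at hr
    obtain ⟨x, x', hxx, rfl⟩ := hr
    have hD : 0 < x' - x := by linarith
    have hE : 0 < h x' - h x := sub_pos.mpr (hhsm hxx)
    have hk := keyU x x' hxx
    rw [div_le_iff₀ hD]
    nlinarith
  have bddB : BddBelow Rset := ⟨0, fun r hr => (Rpos r hr).le⟩
  obtain ⟨S, hSdef⟩ : ∃ S : ℝ, S = sSup Rset := ⟨_, rfl⟩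
  obtain ⟨s, hsdef⟩ : ∃ s : ℝ, s = sInf Rset := ⟨_, rfl⟩
  have hleS : ∀ r ∈ Rset, r ≤ S := by
    intro r hr; rw [hSdef]; exact le_csSup bddA hr
  have hsler : ∀ r ∈ Rset, s ≤ r := by
    intro r hr; rw [hsdef]; exact csInf_le bddB hr
  have hSlub : ∀ c : ℝ, (∀ r ∈ Rset, r ≤ c) → S ≤ c := by
    intro c hc; rw [hSdef]; exact csSup_le Rne hc
  have hsglb : ∀ c : ℝ, (∀ r ∈ Rset, c ≤ r) → c ≤ s := by
    intro c hc; rw [hsdef]; exact le_csInf Rne hc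
  have hS0 : 0 < S := lt_of_lt_of_le (Rpos _ (memR 0 1 one_pos)) (hleS _ (memR 0 1 one_pos))
  -- every element of Rset is at most K - lam / S
  have hbound : ∀ r ∈ Rset, r ≤ K - lam / S := by
    intro r hr
    rw [hRdef] at hr
    obtain ⟨x, x', hxx, rfl⟩ := hr
    have hD : 0 < x' - x := by linarith
    have hE : 0 < h x' - h x := sub_pos.mpr (hhsm hxx)
    have hkey := keyU x x' hxx
    have hr' : (x' - x) / (h x' - h x) ≤ S := hleS _ (memR' x x' hxx)
    have h1 : x' - x ≤ S * (h x' - h x) := by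
      rw [div_le_iff₀ hE] at hr'
      linarith
    rw [div_le_iff₀ hD]
    have h2 : lam / S * (x' - x) ≤ lam * (h x' - h x) := by
      have h3 : lam / S * (x' - x) ≤ lam / S * (S * (h x' - h x)) :=
        mul_le_mul_of_nonneg_left h1 (div_pos hlam0 hS0).le
      have h4 : lam / S * (S * (h x' - h x)) = lam * (h x' - h x) := by
        field_simp
      linarith
    nlinarith
  have hSle : S ≤ K - lam / S := hSlub _ hbound
  have hSquad : S ^ 2 - K * S + lam ≤ 0 := by
    have h1 := mul_le_mul_of_nonneg_right hSle hS0.le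
    have h4 : (K - lam / S) * S = K * S - lam := by field_simp
    nlinarith
  -- s > 0 and s < K
  have hrltK : ∀ r ∈ Rset, r < K := by
    intro r hr
    have h1 := hbound r hr
    have h2 : lam / S > 0 := div_pos hlam0 hS0
    linarith
  have hsltK : s < K := lt_of_le_of_lt (hsler _ (memR 0 1 one_pos))
    (hrltK _ (memR 0 1 one_pos))
  have hKs : 0 < K - s := by linarith
  -- lower bound for s
  have hslb : ∀ r ∈ Rset, lam / (K - s) ≤ r := by
    intro r hr
    rw [hRdef] at hr
    obtain ⟨w, w', hww, rfl⟩ := hr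
    have hxx : g w < g w' := hsm hww
    have hD : 0 < g w' - g w := sub_pos.mpr hxx
    have hE1 : h (g w) = w := hleft w
    have hE2 : h (g w') = w' := hleft w'
    have hkey := keyU (g w) (g w') hxx
    rw [hE1, hE2] at hkey
    have hrimg : s ≤ (g (g w') - g (g w)) / (g w' - g w) := hsler _ (memR _ _ hxx)
    have hG : s * (g w' - g w) ≤ g (g w') - g (g w) := by
      rw [le_div_iff₀ hD] at hrimg
      linarith
    have hww' : 0 < w' - w := by linarith
    rw [div_le_div_iff₀ hKs hww']
    nlinarith
  have hsge : lam / (K - s) ≤ s := hsglb _ hslb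
  have hsquad : s ^ 2 - K * s + lam ≤ 0 := by
    rw [div_le_iff₀ hKs] at hsge
    nlinarith
  -- the root A
  obtain ⟨t, htdef⟩ : ∃ t : ℝ, t = Real.sqrt (K ^ 2 - 4 * lam) := ⟨_, rfl⟩
  have hK2 : 0 ≤ K ^ 2 - 4 * lam := by
    have h1 : (1 + lam) ≤ K := by rw [hKdef]; linarith
    nlinarith [sq_nonneg (1 - lam)]
  have ht0 : 0 ≤ t := htdef ▸ Real.sqrt_nonneg _
  have ht2 : t ^ 2 = K ^ 2 - 4 * lam := by rw [htdef]; exact Real.sq_sqrt hK2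
  have htltK : t < K := by nlinarith
  obtain ⟨A, hAdef⟩ : ∃ A : ℝ, A = (K + t) / 2 := ⟨_, rfl⟩
  have hA0 : 0 < A := by rw [hAdef]; linarith
  have hA2 : A ^ 2 - K * A + lam = 0 := by
    rw [hAdef]; linear_combination ht2 / 4
  have hAge : K - A ≤ A := by rw [hAdef]; linarith
  have hKA0 : 0 < K - A := by rw [hAdef]; linarith
  have hSA : S ≤ A := (quad_bounds lam A S K hA2 hAge hSquad).2
  have hsKA : K - A ≤ s := (quad_bounds lam A s K hA2 hAge hsquad).1
  -- the minimum point argument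
  obtain ⟨x₀, hx₀mem, hx₀⟩ := hm₂
  have hkeymain : 2 * (K - A) ≤ 1 + lam + m := by
    apply le_of_forall_pos_le_add
    intro ε hε
    obtain ⟨δ, hδ0, hδ⟩ := Metric.continuousAt_iff.mp hφ'c.continuousAt ε hε
    obtain ⟨b, hbdef⟩ : ∃ b : ℝ, b = x₀ + δ / 2 := ⟨_, rfl⟩
    have hab : x₀ < b := by rw [hbdef]; linarith
    obtain ⟨c, hcmem, hc'⟩ := exists_deriv_eq_slope φ hab hφc.continuousOn
      hφd.differentiableOn
    have hcd : dist c x₀ < δ := by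
      rw [Real.dist_eq, abs_lt]
      have h1 := hcmem.1
      have h2 := hcmem.2
      rw [hbdef] at h2
      constructor <;> linarith
    have hcε : deriv φ c < m + ε := by
      have h1 := hδ hcd
      rw [Real.dist_eq, hx₀, abs_lt] at h1
      linarith [h1.2]
    have hD : 0 < b - x₀ := by linarith
    have hslope : φ b - φ x₀ ≤ (m + ε) * (b - x₀) := by
      rw [hc'] at hcε
      have h5 : (φ b - φ x₀) / (b - x₀) ≤ m + ε := hcε.le
      rw [div_le_iff₀ hD] at h5
      linarith
    have hE : 0 < h b - h x₀ := sub_pos.mpr (hhsm hab)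
    -- D ≤ A * E
    have hr' : (b - x₀) / (h b - h x₀) ≤ A := le_trans (hleS _ (memR' x₀ b hab)) hSA
    have hDAE : b - x₀ ≤ A * (h b - h x₀) := by
      rw [div_le_iff₀ hE] at hr'
      linarith
    have hlamE : lam / A * (b - x₀) ≤ lam * (h b - h x₀) := by
      have h3 : lam / A * (b - x₀) ≤ lam / A * (A * (h b - h x₀)) :=
        mul_le_mul_of_nonneg_left hDAE (div_pos hlam0 hA0).le
      have h4 : lam / A * (A * (h b - h x₀)) = lam * (h b - h x₀) := by
        field_simp
      linarith
    have hlamA : lam / A = K - A := by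
      rw [div_eq_iff (ne_of_gt hA0)]
      linear_combination hA2
    -- now bound s from above
    have hsleb : s ≤ (g b - g x₀) / (b - x₀) := hsler _ (memR x₀ b hab)
    have hid := hiden x₀ b
    have hup : (g b - g x₀) / (b - x₀) ≤ 1 + lam + (m + ε) - (K - A) := by
      rw [div_le_iff₀ hD, ← hlamA]
      have hexp : (1 + lam + (m + ε) - lam / A) * (b - x₀)
          = (1 + lam) * (b - x₀) + (m + ε) * (b - x₀) - lam / A * (b - x₀) := by ring
      rw [hexp]
      linarith [hid, hslope, hlamE]
    have hfin : K - A ≤ 1 + lam + (m + ε) - (K - A) := le_trans hsKA (le_trans hsleb hup)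
    linarith
  -- conclusion
  have hQ : 0 < 1 + lam + m := lt_of_lt_of_le (by linarith) hkeymain
  constructor
  · linarith
  · have hrw : (1 + m / (1 + lam))⁻¹ = (1 + lam) / (1 + lam + m) := by
      have h1 : 1 + m / (1 + lam) = (1 + lam + m) / (1 + lam) := by
        field_simp
      rw [h1, inv_div]
    rw [hrw]
    apply le_trans _ (le_max_right _ _)
    have hgoal : (1 / (2 * lam)) * (1 + lam + M + Real.sqrt ((1 + lam + M) ^ 2 - 4 * lam))
        = 1 / (2 * lam) * (K + t) := by rw [htdef, hKdef]
    rw [hgoal]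
    have h8 : (K - A) * A = lam := by linear_combination -hA2
    have h7 : 2 * lam ≤ (1 + lam + m) * A := by
      have h10 := mul_le_mul_of_nonneg_right hkeymain hA0.le
      nlinarith [h10, h8]
    rw [div_le_iff₀ hQ]
    have h9 : 1 / (2 * lam) * (K + t) * (1 + lam + m) = (K + t) * (1 + lam + m) / (2 * lam) := by
      ring
    have hKt : K + t = 2 * A := by rw [hAdef]; ring
    rw [h9, le_div_iff₀ (by positivity : (0:ℝ) < 2 * lam), hKt]
    nlinarith [h7, mul_pos hlam0 (sub_pos.mpr hlam1)]
end
end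

section
/- Let λ∈(0,1). There exist constants C>0 and M₀>0 such that for every M∈(0,M₀] and every m∈(−(1+λ),0] satisfying (1 + m/(1+λ))⁻¹ ≤ (1+λ)/2 + M/2 + ((1−λ)²/4 + M²/4 + (1+λ)M/2)^{1/2}, one has −m ≤ ((1+λ)/(1−λ))·M + C·M². -/
open Real

theorem case1_asymptotics (lam : ℝ) (hlam : lam ∈ Set.Ioo (0 : ℝ) 1) :
    ∃ C M₀ : ℝ, 0 < C ∧ 0 < M₀ ∧
      ∀ M m : ℝ, 0 < M → M ≤ M₀ → -(1 + lam) < m → m ≤ 0 →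
        (1 + m / (1 + lam))⁻¹ ≤
            (1 + lam) / 2 + M / 2 +
              Real.sqrt ((1 - lam) ^ 2 / 4 + M ^ 2 / 4 + (1 + lam) * M / 2) →
        -m ≤ ((1 + lam) / (1 - lam)) * M + C * M ^ 2 := by
  obtain ⟨h0, h1l⟩ := hlam
  have hd : (0:ℝ) < 1 - lam := by linarith
  have hs : (0:ℝ) < 1 + lam := by linarith
  refine ⟨(1 + lam) / (4 * (1 - lam)), 1, by positivity, one_pos, ?_⟩
  intro M m hM hM1 hm1 hm0 hineq
  set A := (1 - lam) ^ 2 / 4 + M ^ 2 / 4 + (1 + lam) * M / 2 with hA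
  have hA0 : 0 ≤ A := by positivity
  set t := Real.sqrt A with htdef
  have ht0 : 0 ≤ t := Real.sqrt_nonneg A
  have ht2 : t ^ 2 = A := Real.sq_sqrt hA0
  rw [hA] at ht2
  have htlb : (1 - lam) / 2 ≤ t := by nlinarith
  have htub : t * (1 - lam) ≤ (1 - lam) ^ 2 / 2 + M ^ 2 / 4 + (1 + lam) * M / 2 := by
    nlinarith [sq_nonneg (M ^ 2 / 4 + (1 + lam) * M / 2), mul_nonneg ht0 hd.le]
  have hR1 : (1:ℝ) ≤ (1 + lam) / 2 + M / 2 + t := by linarith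
  have h1 : 0 < 1 + m / (1 + lam) := by
    have : -1 < m / (1 + lam) := by
      rw [lt_div_iff₀ hs]; linarith
    linarith
  have hkey : 1 ≤ ((1 + lam) / 2 + M / 2 + t) * (1 + m / (1 + lam)) := by
    have h := mul_le_mul_of_nonneg_right hineq (le_of_lt h1)
    rwa [inv_mul_cancel₀ (ne_of_gt h1)] at h
  have hms : m / (1 + lam) * (1 + lam) = m := div_mul_cancel₀ m (ne_of_gt hs)
  have hmne : -m ≤ (1 + lam) * (((1 + lam) / 2 + M / 2 + t) - 1) := by
    nlinarith [hkey, hR1, hm0, hs]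
  have hgoal : (-m) * (1 - lam) ≤ (1 + lam) * M + (1 + lam) * M ^ 2 / 4 := by
    nlinarith [mul_le_mul_of_nonneg_right hmne hd.le,
      mul_le_mul_of_nonneg_left htub hs.le]
  have heq : (1 + lam) / (1 - lam) * M + (1 + lam) / (4 * (1 - lam)) * M ^ 2
      = ((1 + lam) * M + (1 + lam) * M ^ 2 / 4) / (1 - lam) := by
    field_simp
  rw [heq, le_div_iff₀ hd]
  exact hgoal
end

section
/- Let λ∈(0,1). There exist constants C>0 and M₀>0 such that for every M∈(0,M₀] and every m∈(−(1+λ),0] satisfying (1 + m/(1+λ))⁻¹ ≤ (1/(2λ))·(1+λ+M+((1+λ+M)²−4λ)^{1/2}), one has −m ≤ 1−λ² + (λ(1+λ)/(1−λ))·M + C·M². -/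
open Real

theorem case2_asymptotics (lam : ℝ) (hlam : lam ∈ Set.Ioo (0 : ℝ) 1) :
    ∃ C M₀ : ℝ, 0 < C ∧ 0 < M₀ ∧
      ∀ M m : ℝ, 0 < M → M ≤ M₀ → -(1 + lam) < m → m ≤ 0 →
        (1 + m / (1 + lam))⁻¹ ≤
            (1 / (2 * lam)) * (1 + lam + M + Real.sqrt ((1 + lam + M) ^ 2 - 4 * lam)) →
        -m ≤ 1 - lam ^ 2 + (lam * (1 + lam) / (1 - lam)) * M + C * M ^ 2 := by
  obtain ⟨hl0, hl1⟩ := hlam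
  refine ⟨1, 1, one_pos, one_pos, ?_⟩
  intro M m hM hM1 hm1 hm2 hineq
  have h1l : (0:ℝ) < 1 - lam := by linarith
  have h1p : (0:ℝ) < 1 + lam := by linarith
  set s := Real.sqrt ((1 + lam + M) ^ 2 - 4 * lam) with hs
  have hs0 : 0 ≤ s := Real.sqrt_nonneg _
  -- bound on the square root
  have ht : M ≤ (1 + lam) * M / (1 - lam) := by
    rw [le_div_iff₀ h1l]; nlinarith
  have hteq : (1 - lam) * ((1 + lam) * M / (1 - lam)) = (1 + lam) * M := by
    field_simp
  have hsle : s ≤ (1 - lam) + (1 + lam) * M / (1 - lam) := by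
    have hD : (1 + lam + M) ^ 2 - 4 * lam ≤ ((1 - lam) + (1 + lam) * M / (1 - lam)) ^ 2 := by
      nlinarith [ht, hteq, hM.le]
    calc s ≤ Real.sqrt (((1 - lam) + (1 + lam) * M / (1 - lam)) ^ 2) := Real.sqrt_le_sqrt hD
      _ = (1 - lam) + (1 + lam) * M / (1 - lam) := Real.sqrt_sq (by positivity)
  have hx : 0 < 1 + m / (1 + lam) := by
    have hne : -1 < m / (1 + lam) := by
      rw [lt_div_iff₀ h1p]; linarith
    linarith
  -- from the hypothesis, 1 ≤ x * r
  have h1 : 1 ≤ (1 + m / (1 + lam)) *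
      ((1 / (2 * lam)) * (1 + lam + M + s)) := by
    have := mul_le_mul_of_nonneg_left hineq hx.le
    rwa [mul_inv_cancel₀ (ne_of_gt hx)] at this
  have h2 : 1 ≤ (1 + m / (1 + lam)) *
      ((1 / (2 * lam)) * (1 + lam + M + ((1 - lam) + (1 + lam) * M / (1 - lam)))) := by
    refine h1.trans ?_
    gcongr
  have e2 : (1 + m / (1 + lam)) *
      ((1 / (2 * lam)) * (1 + lam + M + ((1 - lam) + (1 + lam) * M / (1 - lam)))) =
      ((1 + lam + m) * (1 - lam + M)) / (lam * (1 - lam) * (1 + lam)) := by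
    field_simp
    ring
  rw [e2, le_div_iff₀ (by positivity)] at h2
  have e : 1 - lam ^ 2 + (lam * (1 + lam) / (1 - lam)) * M + 1 * M ^ 2 =
      ((1 - lam ^ 2) * (1 - lam) + lam * (1 + lam) * M + M ^ 2 * (1 - lam)) / (1 - lam) := by
    field_simp
  rw [e, le_div_iff₀ h1l]
  nlinarith [h2, hM, mul_pos hM hM, mul_pos h1l hM, hm2]
end
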